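/- Let 𝒳 be a nonempty finite set, Θ ⊆ ℝ^d open, and for each x ∈ 𝒳 let θ ↦ p_θ(x) be a strictly positive function differentiable on Θ with Σ_{x∈𝒳} p_θ(x) = 1 for every θ ∈ Θ. Fix θ̄ ∈ Θ, let q(x'|x) be a Markov kernel on 𝒳 and q₁ a probability distribution on 𝒳, and define q_k(x) = Σ_{x'} q(x|x') q_{k−1}(x'). Assume the iterates converge geometrically to p_{θ̄}: there are C̃ > 0 and α ∈ (0,1) with Σ_{x∈𝒳} |q_n(x) − p_{θ̄}(x)| ≤ C̃ α^n for all n ≥ 1. Then ‖ ∇_θ Σ_{x∈𝒳} q_n(x) log p_θ(x) |_{θ=θ̄} ‖₁ ≤ C α^n for all n ≥ 1, where C = C̃ · max_{x∈𝒳} ‖ ∇_θ log p_θ(x) |_{θ=θ̄} ‖₁; in particular the gradient of the first term of the lower bound vanishes asymptotically as n → ∞. -/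

import Mathlib

open Finset

/-- `qIter q q1 k` is the distribution `q_{k+1}` obtained from the data distribution
`q₁ = qIter q q1 0` by `k` applications of the Markov kernel `q`,
where `q x x'` denotes `q(x | x')`, i.e. the transition probability from `x'` to `x`. -/
noncomputable def qIter {X : Type} [Fintype X] (q : X → X → ℝ) (q1 : X → ℝ) : ℕ → X → ℝ
  | 0 => q1
  | k + 1 => fun x => ∑ x' : X, q x x' * qIter q q1 k x'

/-- if the kernel iterates `q_n` (here `qIter q q1 (n-1)`, so the bounds are
indexed by `α^(k+1)` with `q_{k+1} = qIter q q1 k`) converge geometrically to `p θb` in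
total variation, `∑_x |q_n(x) − p_θb(x)| ≤ C̃ α^n`, then the ℓ¹ norm of the gradient of
`θ ↦ ∑_x q_n(x) log p_θ(x)` at `θb` is bounded by `C α^n`, where
`C = C̃ · max_x ‖∇_θ log p_θ(x)|_{θb}‖₁`; in particular it vanishes as `n → ∞`.
Gradients are represented componentwise via the Fréchet derivative applied to the
standard basis vectors `Pi.single i 1`, and `‖v‖₁ = ∑ i |v i|`. -/
theorem grad_first_term_vanishes_geometrically
    {X : Type} [Fintype X] [Nonempty X] {d : ℕ}
    (Θ : Set (Fin d → ℝ)) (hΘ : IsOpen Θ)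
    (p : (Fin d → ℝ) → X → ℝ)
    (hpos : ∀ θ ∈ Θ, ∀ x : X, 0 < p θ x)
    (hdiff : ∀ x : X, ∀ θ ∈ Θ, DifferentiableAt ℝ (fun θ' => p θ' x) θ)
    (hsum : ∀ θ ∈ Θ, ∑ x : X, p θ x = 1)
    (θb : Fin d → ℝ) (hθb : θb ∈ Θ)
    (q : X → X → ℝ) (q1 : X → ℝ)
    (hq_nonneg : ∀ x' x : X, 0 ≤ q x' x)
    (hq_kernel : ∀ x : X, ∑ x' : X, q x' x = 1)
    (hq1_nonneg : ∀ x, 0 ≤ q1 x) (hq1_sum : ∑ x : X, q1 x = 1)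
    (Ct : ℝ) (hCt : 0 < Ct) (α : ℝ) (hα0 : 0 < α) (hα1 : α < 1)
    (hgeo : ∀ k : ℕ, ∑ x : X, |qIter q q1 k x - p θb x| ≤ Ct * α ^ (k + 1)) :
    ∀ k : ℕ,
      ∑ i : Fin d,
          |(fderiv ℝ (fun θ => ∑ x : X, qIter q q1 k x * Real.log (p θ x)) θb)
            (Pi.single i 1)|
        ≤ (Ct * Finset.univ.sup' Finset.univ_nonempty
              (fun x : X => ∑ i : Fin d,
                |(fderiv ℝ (fun θ => Real.log (p θ x)) θb) (Pi.single i 1)|))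
            * α ^ (k + 1) := by
  intro k
  set c : X → ℝ := qIter q q1 k with hc
  have hpne : ∀ x : X, p θb x ≠ 0 := fun x => (hpos θb hθb x).ne'
  have hfd : ∀ x : X, HasFDerivAt (fun θ => p θ x) (fderiv ℝ (fun θ => p θ x) θb) θb :=
    fun x => (hdiff x θb hθb).hasFDerivAt
  set f' : X → (Fin d → ℝ) →L[ℝ] ℝ := fun x => fderiv ℝ (fun θ => p θ x) θb with hf'
  set g : X → (Fin d → ℝ) →L[ℝ] ℝ := fun x => fderiv ℝ (fun θ => Real.log (p θ x)) θb with hg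
  have hdlog : ∀ x : X, DifferentiableAt ℝ (fun θ => Real.log (p θ x)) θb :=
    fun x => (hdiff x θb hθb).log (hpne x)
  have hlog : ∀ x : X, HasFDerivAt (fun θ => Real.log (p θ x)) (g x) θb :=
    fun x => (hdlog x).hasFDerivAt
  have hsmul : ∀ x : X, p θb x • g x = f' x := by
    intro x
    have h := (hfd x).log (hpne x)
    simp only [hg, hf', h.fderiv, smul_smul, mul_inv_cancel₀ (hpne x), one_smul]
  have hzero : (∑ x : X, f' x) = 0 := by
    have h1 : HasFDerivAt (fun θ => ∑ x : X, p θ x) (∑ x : X, f' x) θb :=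
      HasFDerivAt.fun_sum (fun x _ => hfd x)
    have h2 : (fun θ => ∑ x : X, p θ x) =ᶠ[nhds θb] fun _ => (1:ℝ) := by
      filter_upwards [hΘ.mem_nhds hθb] with θ hθ using hsum θ hθ
    have h3 : HasFDerivAt (fun _ : Fin d → ℝ => (1:ℝ)) (∑ x : X, f' x) θb :=
      h1.congr_of_eventuallyEq h2.symm
    exact (h3.unique (hasFDerivAt_const (1:ℝ) θb))
  have hzero' : (∑ x : X, p θb x • g x) = 0 := by
    rw [Finset.sum_congr rfl (fun x _ => hsmul x)]; exact hzero
  have hmain : HasFDerivAt (fun θ => ∑ x : X, c x * Real.log (p θ x))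
      (∑ x : X, c x • g x) θb :=
    HasFDerivAt.fun_sum (fun x _ => (hlog x).const_mul (c x))
  have hFi : ∀ v : Fin d → ℝ,
      (fderiv ℝ (fun θ => ∑ x : X, c x * Real.log (p θ x)) θb) v
        = ∑ x : X, (c x - p θb x) * (g x) v := by
    intro v
    have h0 : (∑ x : X, p θb x * (g x) v) = 0 := by
      have := congrArg (fun (L : (Fin d → ℝ) →L[ℝ] ℝ) => L v) hzero'
      simpa [ContinuousLinearMap.sum_apply, ContinuousLinearMap.smul_apply,
        smul_eq_mul] using this
    rw [hmain.fderiv]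
    simp only [ContinuousLinearMap.sum_apply, ContinuousLinearMap.smul_apply, smul_eq_mul,
      sub_mul]
    rw [Finset.sum_sub_distrib, h0, sub_zero]
  set M : ℝ := Finset.univ.sup' Finset.univ_nonempty
      (fun x : X => ∑ i : Fin d, |(g x) (Pi.single i 1)|) with hM
  have hM0 : 0 ≤ M := by
    obtain ⟨x0⟩ := (inferInstance : Nonempty X)
    exact le_trans (Finset.sum_nonneg fun i _ => abs_nonneg _)
      (Finset.le_sup' (fun x : X => ∑ i : Fin d, |(g x) (Pi.single i 1)|)
        (Finset.mem_univ x0))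
  calc ∑ i : Fin d, |(fderiv ℝ (fun θ => ∑ x : X, c x * Real.log (p θ x)) θb)
          (Pi.single i 1)|
      = ∑ i : Fin d, |∑ x : X, (c x - p θb x) * (g x) (Pi.single i 1)| := by
        simp only [hFi]
    _ ≤ ∑ i : Fin d, ∑ x : X, |c x - p θb x| * |(g x) (Pi.single i 1)| := by
        refine Finset.sum_le_sum fun i _ => ?_
        refine (Finset.abs_sum_le_sum_abs _ _).trans_eq ?_
        simp [abs_mul]
    _ = ∑ x : X, |c x - p θb x| * (∑ i : Fin d, |(g x) (Pi.single i 1)|) := by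
        rw [Finset.sum_comm]
        simp [Finset.mul_sum]
    _ ≤ ∑ x : X, |c x - p θb x| * M :=
        Finset.sum_le_sum fun x _ => mul_le_mul_of_nonneg_left
          (Finset.le_sup' (fun x : X => ∑ i : Fin d, |(g x) (Pi.single i 1)|)
            (Finset.mem_univ x)) (abs_nonneg _)
    _ = (∑ x : X, |c x - p θb x|) * M := by rw [Finset.sum_mul]
    _ ≤ (Ct * α ^ (k + 1)) * M := mul_le_mul_of_nonneg_right (hgeo k) hM0
    _ = (Ct * M) * α ^ (k + 1) := by ring
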